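/- Let (G_i)_{i≥1} be i.i.d. random variables, each distributed as Geometric(1/2) conditioned to be at most M. Let m > 0 and integers a_1, ..., a_m with 0 < a_i < M, and nonnegative integers d_1, ..., d_{m−1} be given. Call a position l 'valid' if G_l ≥ a_1, G_{l+d_1+1} ≥ a_2, G_{l+d_1+1+d_2+1} ≥ a_3, ..., G_{l+m−1+Σ_{i=1}^{m−1} d_i} ≥ a_m. Let Z be the minimal valid position. Then for any a > 0, writing s = Σ_{i=1}^m a_i, we have P(Z > ⌈a·2^s⌉) ≤ exp(−a/m²). -/

import Mathlib

open MeasureTheory ProbabilityTheory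

open Finset in
lemma exists_good_subset (N m : ℕ) (hm : 0 < m) (c : ℕ → ℕ) :
    ∃ S : Finset ℕ, S ⊆ Finset.Icc 1 N ∧
      (∀ l ∈ S, ∀ l' ∈ S, l ≠ l' → ∀ j < m, ∀ j' < m, l + c j ≠ l' + c j') ∧
      N ≤ S.card * (m * m) := by
  classical
  set Valid : Finset ℕ → Prop := fun S =>
    ∀ l ∈ S, ∀ l' ∈ S, l ≠ l' → ∀ j < m, ∀ j' < m, l + c j ≠ l' + c j' with hV
  have h𝒮 : (∅ : Finset ℕ) ∈ (Finset.Icc 1 N).powerset.filter Valid := by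
    simp [Valid]
  obtain ⟨S, hS, hmax⟩ := Finset.exists_max_image _ Finset.card ⟨∅, h𝒮⟩
  simp only [mem_filter, mem_powerset] at hS
  refine ⟨S, hS.1, hS.2, ?_⟩
  have hcov : ∀ x ∈ Finset.Icc 1 N, ∃ l ∈ S, ∃ j < m, ∃ j' < m, x + c j = l + c j' := by
    intro x hx
    by_cases hxS : x ∈ S
    · exact ⟨x, hxS, 0, hm, 0, hm, rfl⟩
    by_contra hcon
    push_neg at hcon
    have hins : insert x S ∈ (Finset.Icc 1 N).powerset.filter Valid := by
      rw [mem_filter, mem_powerset]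
      constructor
      · exact insert_subset hx hS.1
      · intro l hl l' hl' hne j hj j' hj'
        rcases mem_insert.1 hl with hlx | hlS
        · rcases mem_insert.1 hl' with hlx' | hlS'
          · exact absurd (hlx.trans hlx'.symm) hne
          · rw [hlx]; exact hcon l' hlS' j hj j' hj'
        · rcases mem_insert.1 hl' with hlx' | hlS'
          · rw [hlx']; intro h; exact hcon l hlS j' hj' j hj h.symm
          · exact hS.2 l hlS l' hlS' hne j hj j' hj'
    have := hmax _ hins
    rw [card_insert_of_notMem hxS] at this
    omega
  have hsub : Finset.Icc 1 N ⊆ S.biUnion (fun l =>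
      ((Finset.range m) ×ˢ (Finset.range m)).image (fun jj => l + c jj.2 - c jj.1)) := by
    intro x hx
    obtain ⟨l, hl, j, hj, j', hj', he⟩ := hcov x hx
    refine mem_biUnion.2 ⟨l, hl, mem_image.2 ⟨(j, j'), ?_, ?_⟩⟩
    · exact mem_product.2 ⟨mem_range.2 hj, mem_range.2 hj'⟩
    · simp only; omega
  calc N = (Finset.Icc 1 N).card := by rw [Nat.card_Icc]; omega
    _ ≤ _ := Finset.card_le_card hsub
    _ ≤ ∑ l ∈ S, (((Finset.range m) ×ˢ (Finset.range m)).image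
          (fun jj => l + c jj.2 - c jj.1)).card := Finset.card_biUnion_le
    _ ≤ ∑ l ∈ S, m * m := by
        refine Finset.sum_le_sum fun l _ => ?_
        calc _ ≤ ((Finset.range m) ×ˢ (Finset.range m)).card := Finset.card_image_le
          _ = m * m := by simp
    _ = S.card * (m * m) := by rw [Finset.sum_const, smul_eq_mul]

lemma geom_tail_sum {b M : ℕ} (hb : b ≤ M) :
    ∑ x ∈ Finset.Icc b M, ((2:ℝ)^x)⁻¹ = 2 * ((2:ℝ)^b)⁻¹ - ((2:ℝ)^M)⁻¹ := by
  have h2 : ((2:ℝ)⁻¹) ≠ 1 := by norm_num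
  have : ∑ x ∈ Finset.Icc b M, ((2:ℝ)^x)⁻¹ = ∑ x ∈ Finset.Ico b (M+1), ((2:ℝ)⁻¹)^x := by
    rw [Finset.Ico_add_one_right_eq_Icc]
    exact Finset.sum_congr rfl fun x _ => (inv_pow 2 x).symm
  rw [this, geom_sum_Ico h2 (by omega)]
  rw [pow_succ]
  simp only [inv_pow]
  field_simp
  ring

theorem waiting_time_for_valid_position
    {Ω : Type} [MeasureSpace Ω] [IsProbabilityMeasure (ℙ : Measure Ω)]
    (M m : ℕ) (hm : 0 < m) (G : ℕ → Ω → ℕ)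
    (hind : iIndepFun G ℙ)
    (hdist : ∀ i k : ℕ, ℙ {ω | G i ω = k}
      = if 1 ≤ k ∧ k ≤ M then
          ENNReal.ofReal (((2 : ℝ) ^ k)⁻¹ / (1 - ((2 : ℝ) ^ M)⁻¹)) else 0)
    (a : ℕ → ℕ) (ha : ∀ j < m, 0 < a j ∧ a j < M)
    (d : ℕ → ℕ) (aa : ℝ) (haa : 0 < aa) :
    ℙ {ω | ∀ l : ℕ, 1 ≤ l →
        l ≤ Nat.ceil (aa * (2 : ℝ) ^ (∑ j ∈ Finset.range m, a j)) →
        ¬ (∀ j < m, a j ≤ G (l + j + ∑ i ∈ Finset.range j, d i) ω)}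
      ≤ ENNReal.ofReal (Real.exp (-aa / (m : ℝ) ^ 2)) := by
  classical
  set s := ∑ j ∈ Finset.range m, a j with hs
  set N := Nat.ceil (aa * (2 : ℝ) ^ s) with hN
  set c : ℕ → ℕ := fun j => j + ∑ i ∈ Finset.range j, d i with hc
  have hM : 1 ≤ M := by
    have := ha 0 hm; omega
  have hcinj : Function.Injective c := by
    have hmono : StrictMono c := by
      apply strictMono_nat_of_lt_succ
      intro n
      simp only [hc, Finset.sum_range_succ]
      omega
    exact hmono.injective
  obtain ⟨S, hSsub, hSdisj, hScard⟩ := exists_good_subset N m hm c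
  set K := S.card with hK
  set e : Fin K → ℕ := fun k => ((S.orderIsoOfFin rfl) k : ℕ) with he
  have heS : ∀ k, e k ∈ S := fun k => ((S.orderIsoOfFin rfl) k).2
  have heinj : Function.Injective e := fun k k' h =>
    (S.orderIsoOfFin rfl).injective (Subtype.ext h)
  set idx : Fin K × Fin m → ℕ := fun p => e p.1 + c p.2 with hidx
  have hidxinj : Function.Injective idx := by
    rintro ⟨k, j⟩ ⟨k', j'⟩ h
    simp only [hidx] at h
    by_cases hkk : k = k'
    · subst hkk
      have h1 : c j = c j' := by omega
      have h2 := hcinj h1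
      exact Prod.ext rfl (Fin.val_injective h2)
    · exfalso
      have hne : e k ≠ e k' := fun hh => hkk (heinj hh)
      exact hSdisj (e k) (heS k) (e k') (heS k') hne j j.isLt j' j'.isLt h
  -- the single-site probability
  set P : ℕ → ENNReal := fun k => if 1 ≤ k ∧ k ≤ M then
      ENNReal.ofReal (((2 : ℝ) ^ k)⁻¹ / (1 - ((2 : ℝ) ^ M)⁻¹)) else 0 with hP
  -- the exceptional null set
  set O : Set Ω := ⋃ (p : Fin K × Fin m),
      {ω | ¬(1 ≤ G (idx p) ω ∧ G (idx p) ω ≤ M)} with hO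
  have hOnull : ℙ O = 0 := by
    refine measure_iUnion_null fun p => ?_
    have hsub : {ω | ¬(1 ≤ G (idx p) ω ∧ G (idx p) ω ≤ M)} ⊆
        ⋃ k : ℕ, if 1 ≤ k ∧ k ≤ M then (∅ : Set Ω) else {ω | G (idx p) ω = k} := by
      intro ω hω
      refine Set.mem_iUnion.2 ⟨G (idx p) ω, ?_⟩
      rw [if_neg hω]
      exact rfl
    refine le_antisymm ?_ (zero_le (a := _))
    refine le_trans (measure_mono hsub) ?_
    refine le_trans (measure_iUnion_le _) ?_
    have : ∀ k : ℕ, ℙ (if 1 ≤ k ∧ k ≤ M then (∅ : Set Ω) else {ω | G (idx p) ω = k}) = 0 := by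
      intro k
      by_cases hk : 1 ≤ k ∧ k ≤ M
      · simp [hk]
      · rw [if_neg hk, hdist, if_neg hk]
    simp [this]
  -- combinatorial finsets of patterns
  set 𝒲 : Finset (Fin m → ℕ) :=
    (Fintype.piFinset fun _ : Fin m => Finset.Icc 1 M).filter (fun w => ∃ j, w j < a j.val)
    with h𝒲
  set 𝒱 : Finset (Fin K → Fin m → ℕ) := Fintype.piFinset fun _ => 𝒲 with h𝒱
  set atom : (Fin K → Fin m → ℕ) → Set Ω := fun v =>
    ⋂ (p : Fin K × Fin m), {ω | G (idx p) ω = v p.1 p.2} with hatomdef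
  -- inclusion
  have hincl : {ω | ∀ l : ℕ, 1 ≤ l → l ≤ N →
      ¬ (∀ j < m, a j ≤ G (l + j + ∑ i ∈ Finset.range j, d i) ω)}
      ⊆ (⋃ v ∈ 𝒱, atom v) ∪ O := by
    intro ω hω
    by_cases hωO : ω ∈ O
    · exact Or.inr hωO
    refine Or.inl ?_
    have hrange : ∀ p : Fin K × Fin m, 1 ≤ G (idx p) ω ∧ G (idx p) ω ≤ M := by
      intro p
      by_contra hcon
      exact hωO (Set.mem_iUnion.2 ⟨p, hcon⟩)
    set v : Fin K → Fin m → ℕ := fun k j => G (idx (k, j)) ω with hv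
    have hv𝒱 : v ∈ 𝒱 := by
      rw [h𝒱, Fintype.mem_piFinset]
      intro k
      rw [h𝒲, Finset.mem_filter]
      constructor
      · rw [Fintype.mem_piFinset]
        intro j
        rw [Finset.mem_Icc]
        exact hrange (k, j)
      · -- use that e k is not a valid position
        have hek := hSsub (heS k)
        rw [Finset.mem_Icc] at hek
        have := hω (e k) hek.1 hek.2
        push_neg at this
        obtain ⟨j, hj, hlt⟩ := this
        refine ⟨⟨j, hj⟩, ?_⟩
        have : idx (k, ⟨j, hj⟩) = e k + j + ∑ i ∈ Finset.range j, d i := by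
          simp only [hidx, hc]; ring
        simpa [hv, this] using hlt
    exact Set.mem_biUnion hv𝒱 (Set.mem_iInter.2 fun p => rfl)
  -- atom measure
  have hatom : ∀ v : Fin K → Fin m → ℕ, ℙ (atom v) = ∏ p : Fin K × Fin m, P (v p.1 p.2) := by
    intro v
    set w : ℕ → ℕ := Function.extend idx (fun p => v p.1 p.2) (fun _ => 0) with hw
    have hwidx : ∀ p : Fin K × Fin m, w (idx p) = v p.1 p.2 := fun p =>
      hidxinj.extend_apply _ _ p
    set T : Finset ℕ := Finset.image idx Finset.univ with hT
    have hset : atom v = ⋂ i ∈ T, (G i ⁻¹' {w i}) := by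
      ext ω
      simp only [hatomdef, Set.mem_iInter, Set.mem_preimage, Set.mem_singleton_iff,
        hT, Finset.mem_image, Finset.mem_univ, true_and]
      constructor
      · rintro h i ⟨p, rfl⟩
        rw [hwidx p]; exact h p
      · intro h p
        have := h (idx p) ⟨p, rfl⟩
        rwa [hwidx p] at this
    rw [hset]
    rw [hind.meas_biInter (fun i _ => ⟨{w i}, trivial, rfl⟩)]
    rw [hT, Finset.prod_image (fun p _ q _ h => hidxinj h)]
    refine Finset.prod_congr rfl fun p _ => ?_
    have : (G (idx p) ⁻¹' {w (idx p)}) = {ω | G (idx p) ω = w (idx p)} := rfl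
    rw [this, hdist, hwidx p, hP]
  -- sum of atoms
  have hq : ℙ {ω | ∀ l : ℕ, 1 ≤ l → l ≤ N →
      ¬ (∀ j < m, a j ≤ G (l + j + ∑ i ∈ Finset.range j, d i) ω)}
      ≤ (∑ w ∈ 𝒲, ∏ j : Fin m, P (w j)) ^ K := by
    refine le_trans (measure_mono hincl) ?_
    refine le_trans (measure_union_le _ _) ?_
    rw [hOnull, add_zero]
    refine le_trans (measure_biUnion_finset_le 𝒱 atom) ?_
    have : ∀ v ∈ 𝒱, ℙ (atom v) = ∏ k : Fin K, ∏ j : Fin m, P (v k j) := by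
      intro v _
      rw [hatom v]
      exact Fintype.prod_prod_type (fun p : Fin K × Fin m => P (v p.1 p.2))
    rw [Finset.sum_congr rfl this]
    rw [h𝒱, Finset.sum_prod_piFinset 𝒲 (fun (_ : Fin K) w => ∏ j : Fin m, P (w j))]
    rw [Finset.prod_const, Finset.card_univ, Fintype.card_fin]
  -- scalar estimates
  refine le_trans hq ?_
  have h2M : (0:ℝ) < 1 - ((2:ℝ)^M)⁻¹ := by
    have h1 : (2:ℝ) ≤ (2:ℝ)^M := by
      calc (2:ℝ) = 2^1 := (pow_one 2).symm
        _ ≤ 2^M := by exact pow_le_pow_right₀ (by norm_num) hM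
    have h2 : ((2:ℝ)^M)⁻¹ ≤ 2⁻¹ := by
      apply inv_anti₀ (by norm_num) h1
    linarith
  have htail : ∀ b : ℕ, 1 ≤ b → b ≤ M →
      ∑ x ∈ Finset.Icc b M, P x
        = ENNReal.ofReal ((2*((2:ℝ)^b)⁻¹ - ((2:ℝ)^M)⁻¹) / (1 - ((2:ℝ)^M)⁻¹)) := by
    intro b hb1 hbM
    have hcong : ∀ x ∈ Finset.Icc b M, P x
        = ENNReal.ofReal (((2:ℝ)^x)⁻¹ / (1 - ((2:ℝ)^M)⁻¹)) := by
      intro x hx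
      rw [Finset.mem_Icc] at hx
      rw [hP]
      simp only
      rw [if_pos ⟨le_trans hb1 hx.1, hx.2⟩]
    rw [Finset.sum_congr rfl hcong,
      ← ENNReal.ofReal_sum_of_nonneg (fun x _ => by positivity)]
    congr 1
    rw [← Finset.sum_div, geom_tail_sum hbM]
  have hone : ∑ x ∈ Finset.Icc 1 M, P x = 1 := by
    rw [htail 1 le_rfl hM]
    have heq : (2*((2:ℝ)^(1:ℕ))⁻¹ - ((2:ℝ)^M)⁻¹) / (1 - ((2:ℝ)^M)⁻¹) = 1 := by
      rw [div_eq_one_iff_eq (by linarith)]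
      norm_num
    rw [heq, ENNReal.ofReal_one]
  set Q : ENNReal := ∏ j : Fin m, ∑ x ∈ Finset.Icc (a j.val) M, P x with hQdef
  have hsval : (∑ j : Fin m, a j.val) = s := by
    rw [hs, Fin.sum_univ_eq_sum_range]
  have hQlow : ENNReal.ofReal (((2:ℝ)^s)⁻¹) ≤ Q := by
    have hfac : ∀ j : Fin m,
        ENNReal.ofReal (((2:ℝ)^(a j.val))⁻¹) ≤ ∑ x ∈ Finset.Icc (a j.val) M, P x := by
      intro j
      have haj := ha j.val j.isLt
      rw [htail (a j.val) haj.1 (le_of_lt haj.2)]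
      apply ENNReal.ofReal_le_ofReal
      rw [le_div_iff₀ h2M]
      have h1 : ((2:ℝ)^M)⁻¹ ≤ ((2:ℝ)^(a j.val))⁻¹ := by
        apply inv_anti₀ (by positivity)
        exact pow_le_pow_right₀ (by norm_num) (le_of_lt haj.2)
      have h2 : (0:ℝ) < ((2:ℝ)^(a j.val))⁻¹ := by positivity
      have h3 : (0:ℝ) ≤ ((2:ℝ)^M)⁻¹ := by positivity
      nlinarith
    calc ENNReal.ofReal (((2:ℝ)^s)⁻¹)
        = ∏ j : Fin m, ENNReal.ofReal (((2:ℝ)^(a j.val))⁻¹) := by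
          rw [← ENNReal.ofReal_prod_of_nonneg (fun j _ => by positivity)]
          congr 1
          rw [← hsval, ← Finset.prod_pow_eq_pow_sum, Finset.prod_inv_distrib]
      _ ≤ Q := Finset.prod_le_prod' (fun j _ => hfac j)
  have hsplit : (∑ w ∈ 𝒲, ∏ j : Fin m, P (w j)) + Q = 1 := by
    have htot : ∑ w ∈ Fintype.piFinset (fun _ : Fin m => Finset.Icc 1 M),
        ∏ j : Fin m, P (w j) = 1 := by
      rw [Finset.sum_prod_piFinset (Finset.Icc 1 M) (fun (_ : Fin m) x => P x)]
      rw [Finset.prod_congr rfl (fun j _ => hone), Finset.prod_const, one_pow]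
    have hcompl : Finset.filter (fun w => ¬ ∃ j, w j < a j.val)
        (Fintype.piFinset fun _ : Fin m => Finset.Icc 1 M)
        = Fintype.piFinset (fun j : Fin m => Finset.Icc (a j.val) M) := by
      ext w
      simp only [Finset.mem_filter, Fintype.mem_piFinset, Finset.mem_Icc, not_exists, not_lt]
      constructor
      · rintro ⟨h1, h2⟩ j
        exact ⟨h2 j, (h1 j).2⟩
      · intro h
        refine ⟨fun j => ⟨le_trans (ha j.val j.isLt).1 (h j).1, (h j).2⟩, fun j => (h j).1⟩
    have hQeq : ∑ w ∈ Fintype.piFinset (fun j : Fin m => Finset.Icc (a j.val) M),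
        ∏ j : Fin m, P (w j) = Q := by
      rw [hQdef, Finset.prod_univ_sum (fun j : Fin m => Finset.Icc (a j.val) M)
        (fun (_ : Fin m) x => P x)]
    rw [h𝒲, ← hQeq, ← hcompl]
    rw [Finset.sum_filter_add_sum_filter_not]
    exact htot
  have hWle : (∑ w ∈ 𝒲, ∏ j : Fin m, P (w j))
      ≤ ENNReal.ofReal (1 - ((2:ℝ)^s)⁻¹) := by
    have hQ1 : Q ≤ 1 := by rw [← hsplit]; exact le_add_self
    have h1 : (∑ w ∈ 𝒲, ∏ j : Fin m, P (w j)) ≤ 1 - Q :=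
      (ENNReal.eq_sub_of_add_eq (hQ1.trans_lt ENNReal.one_lt_top).ne hsplit).le
    have h2 : (1:ENNReal) - Q ≤ 1 - ENNReal.ofReal (((2:ℝ)^s)⁻¹) :=
      tsub_le_tsub_left hQlow 1
    refine le_trans h1 (le_trans h2 ?_)
    rw [ENNReal.ofReal_sub 1 (by positivity), ENNReal.ofReal_one]
  calc (∑ w ∈ 𝒲, ∏ j : Fin m, P (w j)) ^ K
      ≤ (ENNReal.ofReal (1 - ((2:ℝ)^s)⁻¹)) ^ K := pow_le_pow_left' hWle K
    _ = ENNReal.ofReal ((1 - ((2:ℝ)^s)⁻¹) ^ K) := by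
        rw [ENNReal.ofReal_pow]
        have : ((2:ℝ)^s)⁻¹ ≤ 1 := by
          rw [inv_le_one_iff₀]
          right
          exact one_le_pow₀ (by norm_num)
        linarith
    _ ≤ ENNReal.ofReal (Real.exp (-aa / (m : ℝ) ^ 2)) := by
        apply ENNReal.ofReal_le_ofReal
        set x : ℝ := ((2:ℝ)^s)⁻¹ with hx
        have hx0 : 0 < x := by positivity
        have hx1 : x ≤ 1 := by
          rw [hx, inv_le_one_iff₀]; right; exact one_le_pow₀ (by norm_num)
        have hstep1 : (1 - x) ^ K ≤ (Real.exp (-x)) ^ K := by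
          apply pow_le_pow_left₀ (by linarith)
          linarith [Real.add_one_le_exp (-x)]
        have hstep2 : (Real.exp (-x)) ^ K = Real.exp (-(x * K)) := by
          rw [← Real.exp_nat_mul]
          ring_nf
        refine le_trans hstep1 ?_
        rw [hstep2, Real.exp_le_exp]
        have hKN : (N:ℝ) ≤ (K:ℝ) * ((m:ℝ) * (m:ℝ)) := by
          exact_mod_cast hScard
        have haaN : aa * (2:ℝ)^s ≤ (N:ℝ) := by
          rw [hN]; exact Nat.le_ceil _
        have hm0 : (0:ℝ) < (m:ℝ) := by exact_mod_cast hm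
        have h2s : (0:ℝ) < (2:ℝ)^s := by positivity
        rw [neg_div, neg_le_neg_iff]
        rw [div_le_iff₀ (by positivity)]
        have : aa * (2:ℝ)^s ≤ (K:ℝ) * ((m:ℝ) * (m:ℝ)) := le_trans haaN hKN
        rw [hx]
        rw [pow_two]
        calc aa ≤ (K:ℝ) * ((m:ℝ) * (m:ℝ)) / (2:ℝ)^s := by
              rw [le_div_iff₀ h2s]; linarith
          _ = ((2:ℝ)^s)⁻¹ * (K:ℝ) * ((m:ℝ) * (m:ℝ)) := by ring
          _ = _ := by ring
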